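/- With the same definitions of bosonic creation and annihilation operators on the occupation-number free module, the canonical commutation relation holds: a_α a_β† − a_β† a_α = δ_{αβ} · id. -/
import Mathlib


noncomputable def annih {I : Type*} (α : I) :
    ((I →₀ ℕ) →₀ ℂ) →ₗ[ℂ] ((I →₀ ℕ) →₀ ℂ) :=
  Finsupp.lsum ℂ fun f =>
    ((Real.sqrt (f α) : ℂ)) • Finsupp.lsingle (f - Finsupp.single α 1)

noncomputable def creat {I : Type*} (α : I) :
    ((I →₀ ℕ) →₀ ℂ) →ₗ[ℂ] ((I →₀ ℕ) →₀ ℂ) :=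
  Finsupp.lsum ℂ fun f =>
    ((Real.sqrt (f α + 1) : ℂ)) • Finsupp.lsingle (f + Finsupp.single α 1)

lemma annih_single {I : Type*} (α : I) (f : I →₀ ℕ) (b : ℂ) :
    annih α (Finsupp.single f b)
      = ((Real.sqrt (f α) : ℂ)) • Finsupp.single (f - Finsupp.single α 1) b := by
  simp [annih]

lemma creat_single {I : Type*} (α : I) (f : I →₀ ℕ) (b : ℂ) :
    creat α (Finsupp.single f b)
      = ((Real.sqrt (f α + 1) : ℂ)) • Finsupp.single (f + Finsupp.single α 1) b := by
  simp [creat]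

/-- Canonical commutation relation: `a_α a_β† − a_β† a_α = δ_{αβ} id`. -/
theorem boson_ccr {I : Type*} [DecidableEq I] (α β : I) :
    annih α ∘ₗ creat β - creat β ∘ₗ annih α =
      if α = β then LinearMap.id else 0 := by
  apply Finsupp.lhom_ext
  intro f b
  rw [LinearMap.sub_apply, LinearMap.comp_apply, LinearMap.comp_apply,
    creat_single, annih_single, map_smul, map_smul, annih_single, creat_single,
    smul_smul, smul_smul]
  by_cases h : α = β
  · subst h
    rw [if_pos rfl, LinearMap.id_apply]
    have hadd : ((f + Finsupp.single α 1 : I →₀ ℕ)) α = f α + 1 := by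
      simp
    rw [hadd, add_tsub_cancel_right]
    rcases Nat.eq_zero_or_pos (f α) with h0 | h0
    · simp [h0]
    · have hle : Finsupp.single α 1 ≤ f := by
        rw [Finsupp.single_le_iff]; omega
      rw [tsub_add_cancel_of_le hle]
      have hsub : ((f - Finsupp.single α 1 : I →₀ ℕ)) α = f α - 1 := by
        simp [Finsupp.tsub_apply]
      rw [hsub, ← sub_smul]
      have e2 : ((f α - 1 : ℕ) : ℝ) = ((f α : ℕ) : ℝ) - 1 := by
        push_cast [h0]; ring
      have h1 : ((Real.sqrt (↑(f α) + 1) : ℂ)) * ((Real.sqrt (↑(f α) + 1) : ℂ))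
          - ((Real.sqrt (↑(f α)) : ℂ)) * ((Real.sqrt (↑(f α - 1) + 1) : ℂ)) = 1 := by
        rw [e2]
        have e1 : ((f α : ℕ) : ℝ) - 1 + 1 = ((f α : ℕ) : ℝ) := by ring
        rw [e1, ← Complex.ofReal_mul, ← Complex.ofReal_mul,
          Real.mul_self_sqrt (by positivity), Real.mul_self_sqrt (by positivity)]
        push_cast
        ring
      push_cast
      rw [h1, one_smul]
  · rw [if_neg h, LinearMap.zero_apply]
    have hca : ((f + Finsupp.single β 1 : I →₀ ℕ)) α = f α := by
      simp [Finsupp.single_apply, Ne.symm h]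
    have hcb : ((f - Finsupp.single α 1 : I →₀ ℕ)) β = f β := by
      simp [Finsupp.tsub_apply, Finsupp.single_apply, h]
    have hidx : f + Finsupp.single β 1 - Finsupp.single α 1
        = f - Finsupp.single α 1 + Finsupp.single β 1 := by
      ext a
      simp only [Finsupp.tsub_apply, Finsupp.add_apply, Finsupp.single_apply]
      by_cases ha : α = a
      · subst ha
        rw [if_neg fun hb => h hb.symm]
        omega
      · simp [ha]
    rw [hca, hcb, hidx, mul_comm, sub_self]
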